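/- For every continuously differentiable functions v : ℝⁿ → ℂ and G : ℝⁿ → ℝ and every real T ≥ 0, the function w(x) := exp(−i(T·|v(x)|² + G(x)))·v(x) satisfies the lower bound ‖∇w‖_{L²(K)} ≥ (2T/3)·‖∇(|v|³)‖_{L²(K)} − |v|_∞·‖∇G‖_{L²(K)} − ‖∇v‖_{L²(K)}, where for a (vector of) function(s) f, ‖f‖_{L²(K)} = (∫_K |f(x)|² π^{−n}dx)^{1/2} and |∇w(x)|² = Σ_{j=1}^n |∂_j w(x)|². -/

import Mathlib

open MeasureTheory ENNReal

noncomputable section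

/-- The cube `K = [0, π]ⁿ ⊂ ℝⁿ`. -/
def cubeK (n : ℕ) : Set (Fin n → ℝ) := Set.Icc 0 (fun _ => Real.pi)

/-- The `L²(K)`-norm of the gradient of `f`, with respect to the normalized
measure `π^{-n} dx`: `‖∇f‖_{L²(K)} = (∫_K Σ_j |∂_j f(x)|² π^{-n} dx)^{1/2}`. -/
def gradL2 {F : Type*} [NormedAddCommGroup F] [NormedSpace ℝ F]
    (n : ℕ) (f : (Fin n → ℝ) → F) : ℝ :=
  Real.sqrt ((Real.pi ^ n)⁻¹ *
    ∫ x in cubeK n, ∑ j : Fin n, ‖fderiv ℝ f x (Pi.single j 1)‖ ^ 2)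

/-- The sup-norm `|f|_∞ = sup_{x ∈ K} |f(x)|`. -/
def supNormK {F : Type*} [NormedAddCommGroup F] (n : ℕ) (f : (Fin n → ℝ) → F) : ℝ :=
  ⨆ x : cubeK n, ‖f (x : Fin n → ℝ)‖

/- Auxiliary lemmas -/

lemma L2sqrt_eq {α E : Type*} [MeasurableSpace α] {μ : Measure α} [NormedAddCommGroup E]
    {f : α → E} (hf : MemLp f 2 μ) :
    (eLpNorm f 2 μ).toReal = Real.sqrt (∫ a, ‖f a‖^2 ∂μ) := by
  rw [hf.eLpNorm_eq_integral_rpow_norm two_ne_zero ENNReal.ofNat_ne_top,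
    ENNReal.toReal_ofReal (by positivity), Real.sqrt_eq_rpow]
  norm_num [Real.rpow_natCast]

lemma L2sqrt_add {α E : Type*} [MeasurableSpace α] {μ : Measure α} [NormedAddCommGroup E]
    {f g : α → E} (hf : MemLp f 2 μ) (hg : MemLp g 2 μ) :
    Real.sqrt (∫ a, ‖f a + g a‖^2 ∂μ) ≤
      Real.sqrt (∫ a, ‖f a‖^2 ∂μ) + Real.sqrt (∫ a, ‖g a‖^2 ∂μ) := by
  have h := eLpNorm_add_le hf.1 hg.1 (by norm_num : (1:ℝ≥0∞) ≤ 2)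
  have hfg : MemLp (f + g) 2 μ := hf.add hg
  have h2 := (ENNReal.toReal_le_toReal hfg.2.ne
    (ENNReal.add_lt_top.2 ⟨hf.2, hg.2⟩).ne).mpr h
  rw [L2sqrt_eq hfg, ENNReal.toReal_add hf.2.ne hg.2.ne, L2sqrt_eq hf, L2sqrt_eq hg] at h2
  simpa [Pi.add_apply] using h2

lemma L2sqrt_add3 {α E : Type*} [MeasurableSpace α] {μ : Measure α} [NormedAddCommGroup E]
    {f g h : α → E} (hf : MemLp f 2 μ) (hg : MemLp g 2 μ) (hh : MemLp h 2 μ) :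
    Real.sqrt (∫ a, ‖f a + g a + h a‖^2 ∂μ) ≤
      Real.sqrt (∫ a, ‖f a‖^2 ∂μ) + Real.sqrt (∫ a, ‖g a‖^2 ∂μ)
        + Real.sqrt (∫ a, ‖h a‖^2 ∂μ) := by
  have h1 : Real.sqrt (∫ a, ‖f a + g a + h a‖^2 ∂μ) ≤
      Real.sqrt (∫ a, ‖f a + g a‖^2 ∂μ) + Real.sqrt (∫ a, ‖h a‖^2 ∂μ) := by
    have := L2sqrt_add (f := f + g) (g := h) (hf.add hg) hh
    simpa [Pi.add_apply] using this
  have h2 := L2sqrt_add hf hg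
  linarith

/-- Membership in `L²` of a continuous function on the compact cube. -/
lemma memL2_cube {n : ℕ} {E : Type*} [NormedAddCommGroup E] {f : (Fin n → ℝ) → E}
    (hf : Continuous f) : MemLp f 2 (volume.restrict (cubeK n)) := by
  have hKc : IsCompact (cubeK n) := isCompact_Icc
  haveI : IsFiniteMeasure (volume.restrict (cubeK n)) :=
    ⟨by rw [Measure.restrict_apply_univ]; exact hKc.measure_lt_top⟩
  obtain ⟨C, hC⟩ := hKc.exists_bound_of_continuousOn hf.continuousOn
  exact MemLp.of_bound hf.aestronglyMeasurable C
    ((ae_restrict_iff' measurableSet_Icc).2 (Filter.Eventually.of_forall hC))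

set_option maxHeartbeats 1000000 in
/-- for `v, G` continuously differentiable and `T ≥ 0`, the function
`w(x) = exp(-i(T|v(x)|² + G(x))) v(x)` satisfies
`‖∇w‖_{L²(K)} ≥ (2T/3)‖∇(|v|³)‖_{L²(K)} - |v|_∞ ‖∇G‖_{L²(K)} - ‖∇v‖_{L²(K)}`. -/
theorem stmt0 (n : ℕ) (hn : 1 ≤ n) (v : (Fin n → ℝ) → ℂ) (G : (Fin n → ℝ) → ℝ)
    (hv : ContDiff ℝ 1 v) (hG : ContDiff ℝ 1 G) (T : ℝ) (hT : 0 ≤ T) :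
    gradL2 n (fun x => Complex.exp (-Complex.I * ((T * ‖v x‖ ^ 2 + G x : ℝ) : ℂ)) * v x) ≥
      (2 * T / 3) * gradL2 n (fun x => ‖v x‖ ^ 3)
        - supNormK n v * gradL2 n G - gradL2 n v := by
  classical
  have hKc : IsCompact (cubeK n) := isCompact_Icc
  have hKm : MeasurableSet (cubeK n) := measurableSet_Icc
  set μ : Measure (Fin n → ℝ) := volume.restrict (cubeK n) with hμdef
  -- differentiability data
  have hdv : Differentiable ℝ v := hv.differentiable one_ne_zero
  have hdG : Differentiable ℝ G := hG.differentiable one_ne_zero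
  have hnsq : ContDiff ℝ 1 (fun y => ‖v y‖^2) := hv.norm_sq ℂ
  have hdnsq : Differentiable ℝ (fun y => ‖v y‖^2) := hnsq.differentiable one_ne_zero
  -- abbreviations for partial derivatives
  set p : (Fin n → ℝ) → Fin n → ℝ :=
    fun x j => fderiv ℝ (fun y => ‖v y‖^2) x (Pi.single j 1) with hp
  set g : (Fin n → ℝ) → Fin n → ℝ := fun x j => fderiv ℝ G x (Pi.single j 1) with hg
  -- vector-valued functions into ℂⁿ (Euclidean)
  set A : (Fin n → ℝ) → EuclideanSpace ℂ (Fin n) :=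
    fun x => (WithLp.equiv 2 (Fin n → ℂ)).symm (fun j => fderiv ℝ v x (Pi.single j 1)) with hA
  set P : (Fin n → ℝ) → EuclideanSpace ℂ (Fin n) :=
    fun x => (WithLp.equiv 2 (Fin n → ℂ)).symm (fun j => ((p x j : ℝ) : ℂ) * v x) with hP
  set Q : (Fin n → ℝ) → EuclideanSpace ℂ (Fin n) :=
    fun x => (WithLp.equiv 2 (Fin n → ℂ)).symm (fun j => ((g x j : ℝ) : ℂ) * v x) with hQ
  set D : (Fin n → ℝ) → EuclideanSpace ℂ (Fin n) :=
    fun x => (WithLp.equiv 2 (Fin n → ℂ)).symm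
      (fun j => fderiv ℝ v x (Pi.single j 1)
        - Complex.I * ((T * p x j + g x j : ℝ) : ℂ) * v x) with hD
  -- continuity facts
  have hpc : Continuous fun x => fderiv ℝ (fun y => ‖v y‖^2) x := hnsq.continuous_fderiv one_ne_zero
  have hgc : Continuous fun x => fderiv ℝ G x := hG.continuous_fderiv one_ne_zero
  have hac : Continuous fun x => fderiv ℝ v x := hv.continuous_fderiv one_ne_zero
  have hAc : Continuous A := by
    exact (PiLp.continuous_toLp 2 fun _ : Fin n => ℂ).comp
      (continuous_pi fun j => hac.clm_apply continuous_const)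
  have hPc : Continuous P := by
    exact (PiLp.continuous_toLp 2 fun _ : Fin n => ℂ).comp
      (continuous_pi fun j =>
        ((Complex.continuous_ofReal.comp (hpc.clm_apply continuous_const)).mul hv.continuous))
  have hQc : Continuous Q := by
    exact (PiLp.continuous_toLp 2 fun _ : Fin n => ℂ).comp
      (continuous_pi fun j =>
        ((Complex.continuous_ofReal.comp (hgc.clm_apply continuous_const)).mul hv.continuous))
  have hDc : Continuous D := by
    refine (PiLp.continuous_toLp 2 fun _ : Fin n => ℂ).comp
      (continuous_pi fun j => (hac.clm_apply continuous_const).sub ?_)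
    exact (continuous_const.mul (Complex.continuous_ofReal.comp
      ((continuous_const.mul (hpc.clm_apply continuous_const)).add
        (hgc.clm_apply continuous_const)))).mul hv.continuous
  -- pointwise derivative of w
  have hw_j : ∀ x j, fderiv ℝ
      (fun y => Complex.exp (-Complex.I * ((T * ‖v y‖ ^ 2 + G y : ℝ) : ℂ)) * v y) x
        (Pi.single j 1)
      = Complex.exp (-Complex.I * ((T * ‖v x‖ ^ 2 + G x : ℝ) : ℂ)) *
        (fderiv ℝ v x (Pi.single j 1)
          - Complex.I * ((T * p x j + g x j : ℝ) : ℂ) * v x) := by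
    intro x j
    have h2 : HasFDerivAt (fun y => ‖v y‖^2) (fderiv ℝ (fun y => ‖v y‖^2) x) x :=
      (hdnsq x).hasFDerivAt
    have hφ : HasFDerivAt (fun y => T * ‖v y‖^2 + G y)
        (T • fderiv ℝ (fun y => ‖v y‖^2) x + fderiv ℝ G x) x :=
      (h2.const_mul T).add (hdG x).hasFDerivAt
    have hof := Complex.ofRealCLM.hasFDerivAt.comp x hφ
    simp only [Function.comp_def, Complex.ofRealCLM_apply] at hof
    have hΦ := hof.const_mul (-Complex.I)
    have hexp := hΦ.cexp
    have hw := hexp.mul (hdv x).hasFDerivAt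
    have hw' : HasFDerivAt
        (fun y => Complex.exp (-Complex.I * ((T * ‖v y‖ ^ 2 + G y : ℝ) : ℂ)) * v y) _ x := hw
    rw [hw'.fderiv]
    simp only [hp, ContinuousLinearMap.add_apply, ContinuousLinearMap.smul_apply,
      ContinuousLinearMap.comp_apply, Complex.ofRealCLM_apply, smul_eq_mul,
      ContinuousLinearMap.coe_smul', Pi.smul_apply, ContinuousLinearMap.map_add,
      ContinuousLinearMap.map_smul]
    push_cast
    ring
  -- pointwise derivative of ‖v‖³
  have hcube : ∀ x, HasFDerivAt (fun y => ‖v y‖^3)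
      ((3/2 * ‖v x‖) • fderiv ℝ (fun y => ‖v y‖^2) x) x := by
    intro x
    have h2 : HasFDerivAt (fun y => ‖v y‖^2) (fderiv ℝ (fun y => ‖v y‖^2) x) x :=
      (hdnsq x).hasFDerivAt
    have hr : HasDerivAt (fun t : ℝ => t ^ (3/2 : ℝ))
        (3/2 * (‖v x‖^2) ^ (3/2 - 1 : ℝ)) (‖v x‖^2) :=
      Real.hasDerivAt_rpow_const (Or.inr (by norm_num))
    have hc := hr.comp_hasFDerivAt x h2
    have heq : (fun y => (‖v y‖^2) ^ (3/2 : ℝ)) = fun y => ‖v y‖^3 := by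
      funext y
      rw [← Real.rpow_natCast ‖v y‖ 2, ← Real.rpow_mul (norm_nonneg _)]
      norm_num
    rw [Function.comp_def, heq] at hc
    have hcoef : (3/2 * (‖v x‖^2) ^ (3/2 - 1 : ℝ)) = 3/2 * ‖v x‖ := by
      rw [← Real.rpow_natCast ‖v x‖ 2, ← Real.rpow_mul (norm_nonneg _)]
      norm_num
    rw [hcoef] at hc
    exact hc
  -- modulus-one factor
  have hexp1 : ∀ r : ℝ, ‖Complex.exp (-Complex.I * (r:ℂ))‖ = 1 := by
    intro r
    simp [Complex.norm_exp]
  -- norm-squared of Euclidean vectors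
  have hnormsq : ∀ (y : Fin n → ℂ),
      ‖(WithLp.equiv 2 (Fin n → ℂ)).symm y‖^2 = ∑ j, ‖y j‖^2 := by
    intro y
    rw [EuclideanSpace.norm_eq, Real.sq_sqrt (by positivity)]
    simp [WithLp.equiv_symm_apply, PiLp.toLp_apply]
  -- integrand identities
  have hIw : (fun x => ∑ j : Fin n, ‖fderiv ℝ
      (fun y => Complex.exp (-Complex.I * ((T * ‖v y‖ ^ 2 + G y : ℝ) : ℂ)) * v y) x
        (Pi.single j 1)‖ ^ 2) = fun x => ‖D x‖^2 := by
    funext x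
    rw [hD, hnormsq]
    refine Finset.sum_congr rfl fun j _ => ?_
    rw [hw_j x j, norm_mul, hexp1, one_mul]
  have hIv : (fun x => ∑ j : Fin n, ‖fderiv ℝ v x (Pi.single j 1)‖ ^ 2)
      = fun x => ‖A x‖^2 := by
    funext x
    rw [hA, hnormsq]
  have hI3 : (fun x => ∑ j : Fin n, ‖fderiv ℝ (fun y => ‖v y‖^3) x (Pi.single j 1)‖ ^ 2)
      = fun x => (9/4) * ‖P x‖^2 := by
    funext x
    rw [hP, hnormsq, Finset.mul_sum]
    refine Finset.sum_congr rfl fun j _ => ?_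
    rw [(hcube x).fderiv]
    simp only [ContinuousLinearMap.coe_smul', Pi.smul_apply, smul_eq_mul]
    simp only [norm_mul, Complex.norm_real, Real.norm_eq_abs, mul_pow, sq_abs, abs_norm]
    ring
  have hQnorm : ∀ x, ‖Q x‖^2 = (∑ j : Fin n, ‖fderiv ℝ G x (Pi.single j 1)‖^2) * ‖v x‖^2 := by
    intro x
    rw [hQ, hnormsq, Finset.sum_mul]
    refine Finset.sum_congr rfl fun j _ => ?_
    simp only [norm_mul, Complex.norm_real, Real.norm_eq_abs, mul_pow, sq_abs, abs_norm, hg]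
  -- sup-norm bound
  set S : ℝ := supNormK n v with hS
  have hbdd : BddAbove (Set.range fun x : cubeK n => ‖v x‖) := by
    rw [show (Set.range fun x : cubeK n => ‖v ↑x‖) = (fun y => ‖v y‖) '' cubeK n from
      (Set.image_eq_range (fun y => ‖v y‖) (cubeK n)).symm]
    exact (hKc.image_of_continuousOn hv.continuous.norm.continuousOn).bddAbove
  have hS0 : 0 ≤ S := Real.iSup_nonneg fun x => norm_nonneg _
  have hSb : ∀ x ∈ cubeK n, ‖v x‖ ≤ S := fun x hx => le_ciSup hbdd (⟨x, hx⟩ : cubeK n)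
  -- L² memberships
  have hmemA : MemLp A 2 μ := memL2_cube hAc
  have hmemP : MemLp P 2 μ := memL2_cube hPc
  have hmemQ : MemLp Q 2 μ := memL2_cube hQc
  have hmemD : MemLp D 2 μ := memL2_cube hDc
  -- key vector identity : (I T) • P = A + (-I) • Q + (- D) pointwise
  have hvec : ∀ x, A x + (-Complex.I) • Q x + -(D x) = ((Complex.I * T) : ℂ) • P x := by
    intro x
    ext j
    simp only [hA, hP, hQ, hD, PiLp.add_apply, PiLp.smul_apply, PiLp.neg_apply,
      WithLp.equiv_symm_apply, PiLp.toLp_apply, smul_eq_mul]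
    push_cast
    ring
  -- main triangle inequality step
  have key : T * Real.sqrt (∫ x, ‖P x‖^2 ∂μ) ≤
      Real.sqrt (∫ x, ‖D x‖^2 ∂μ) + Real.sqrt (∫ x, ‖Q x‖^2 ∂μ)
        + Real.sqrt (∫ x, ‖A x‖^2 ∂μ) := by
    have tri := L2sqrt_add3 (f := A) (g := fun x => (-Complex.I) • Q x)
      (h := fun x => -(D x)) hmemA (hmemQ.const_smul (-Complex.I)) hmemD.neg
    have e1 : (fun x => ‖A x + (-Complex.I) • Q x + -(D x)‖^2)
        = fun x => T^2 * ‖P x‖^2 := by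
      funext x
      rw [hvec x, norm_smul]
      simp [mul_pow, abs_of_nonneg hT]
    have e2 : ∀ x, ‖(-Complex.I) • Q x‖ = ‖Q x‖ := by
      intro x; rw [norm_smul]; simp
    rw [show (∫ x, ‖A x + (-Complex.I) • Q x + -(D x)‖^2 ∂μ) = ∫ x, T^2 * ‖P x‖^2 ∂μ from by
        exact integral_congr_ae (Filter.Eventually.of_forall fun x => congrFun e1 x)] at tri
    rw [integral_const_mul, Real.sqrt_mul (sq_nonneg T), Real.sqrt_sq hT] at tri
    calc T * Real.sqrt (∫ x, ‖P x‖^2 ∂μ)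
        ≤ Real.sqrt (∫ x, ‖A x‖^2 ∂μ) + Real.sqrt (∫ x, ‖(-Complex.I) • Q x‖^2 ∂μ)
            + Real.sqrt (∫ x, ‖-(D x)‖^2 ∂μ) := tri
      _ = Real.sqrt (∫ x, ‖A x‖^2 ∂μ) + Real.sqrt (∫ x, ‖Q x‖^2 ∂μ)
            + Real.sqrt (∫ x, ‖D x‖^2 ∂μ) := by
          rw [show (fun x => ‖(-Complex.I) • Q x‖^2) = fun x => ‖Q x‖^2 from
              funext fun x => by rw [e2], show (fun x => ‖-(D x)‖^2) = fun x => ‖D x‖^2 from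
              funext fun x => by rw [norm_neg]]
      _ ≤ _ := by linarith
  -- bound on Q via the sup norm
  have hQbound : Real.sqrt (∫ x, ‖Q x‖^2 ∂μ) ≤
      S * Real.sqrt (∫ x, ∑ j : Fin n, ‖fderiv ℝ G x (Pi.single j 1)‖^2 ∂μ) := by
    have hint1 : IntegrableOn (fun x => ‖Q x‖^2) (cubeK n) volume :=
      ((hQc.norm.pow 2).continuousOn).integrableOn_compact hKc
    have hint2 : IntegrableOn
        (fun x => S^2 * ∑ j : Fin n, ‖fderiv ℝ G x (Pi.single j 1)‖^2) (cubeK n) volume := by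
      refine (Continuous.continuousOn ?_).integrableOn_compact hKc
      exact continuous_const.mul (continuous_finset_sum _ fun j _ =>
        (hgc.clm_apply continuous_const).norm.pow 2)
    have hmono : (∫ x, ‖Q x‖^2 ∂μ) ≤
        ∫ x, S^2 * ∑ j : Fin n, ‖fderiv ℝ G x (Pi.single j 1)‖^2 ∂μ := by
      refine setIntegral_mono_on hint1 hint2 hKm fun x hx => ?_
      rw [hQnorm x]
      have h1 : ‖v x‖^2 ≤ S^2 := by
        have := hSb x hx
        nlinarith [norm_nonneg (v x)]
      have h2 : 0 ≤ ∑ j : Fin n, ‖fderiv ℝ G x (Pi.single j 1)‖^2 := by positivity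
      nlinarith
    calc Real.sqrt (∫ x, ‖Q x‖^2 ∂μ) ≤
        Real.sqrt (∫ x, S^2 * ∑ j : Fin n, ‖fderiv ℝ G x (Pi.single j 1)‖^2 ∂μ) :=
          Real.sqrt_le_sqrt hmono
      _ = S * Real.sqrt (∫ x, ∑ j : Fin n, ‖fderiv ℝ G x (Pi.single j 1)‖^2 ∂μ) := by
          rw [integral_const_mul, Real.sqrt_mul (sq_nonneg S), Real.sqrt_sq hS0]
  -- rewrite the gradL2 quantities
  set c0 : ℝ := Real.sqrt ((Real.pi ^ n)⁻¹) with hc0def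
  have hc0 : 0 ≤ c0 := Real.sqrt_nonneg _
  have hcinv : (0:ℝ) ≤ (Real.pi ^ n)⁻¹ := by positivity
  have hw_grad : gradL2 n
      (fun x => Complex.exp (-Complex.I * ((T * ‖v x‖ ^ 2 + G x : ℝ) : ℂ)) * v x)
      = c0 * Real.sqrt (∫ x, ‖D x‖^2 ∂μ) := by
    rw [gradL2, hIw, Real.sqrt_mul hcinv]
  have hv_grad : gradL2 n v = c0 * Real.sqrt (∫ x, ‖A x‖^2 ∂μ) := by
    rw [gradL2, hIv, Real.sqrt_mul hcinv]
  have h3_grad : gradL2 n (fun x => ‖v x‖^3)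
      = c0 * (3/2 * Real.sqrt (∫ x, ‖P x‖^2 ∂μ)) := by
    rw [gradL2, hI3, Real.sqrt_mul hcinv]
    congr 1
    rw [show (∫ x, (9:ℝ)/4 * ‖P x‖^2 ∂μ) = 9/4 * ∫ x, ‖P x‖^2 ∂μ from integral_const_mul _ _,
      Real.sqrt_mul (by norm_num : (0:ℝ) ≤ 9/4),
      show ((9:ℝ)/4) = (3/2)^2 by norm_num, Real.sqrt_sq (by norm_num : (0:ℝ) ≤ 3/2)]
  have hG_grad : gradL2 n G
      = c0 * Real.sqrt (∫ x, ∑ j : Fin n, ‖fderiv ℝ G x (Pi.single j 1)‖^2 ∂μ) := by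
    rw [gradL2, Real.sqrt_mul hcinv]
  rw [ge_iff_le, hw_grad, hv_grad, h3_grad, hG_grad]
  have key2 : T * Real.sqrt (∫ x, ‖P x‖^2 ∂μ)
      - S * Real.sqrt (∫ x, ∑ j : Fin n, ‖fderiv ℝ G x (Pi.single j 1)‖^2 ∂μ)
      - Real.sqrt (∫ x, ‖A x‖^2 ∂μ) ≤ Real.sqrt (∫ x, ‖D x‖^2 ∂μ) := by linarith
  nlinarith [mul_le_mul_of_nonneg_left key2 hc0]
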